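/- Let α ∈ (0,1), ε ∈ (0,1), K ∈ ℕ with K ≥ 1, η > 0, let (s̃_t)_{t≥1} and (s_{t,y})_{t≥1, 1≤y≤K} be arbitrary sequences in [0,1], let τ_1 ∈ [0,1], and define τ_{t+1} = τ_t − η·g̃(τ_t, s̃_t, (s_{t,y})_{y=1}^K) for every t ≥ 1. Then for every t ≥ 1: −αη − εη/(1−ε) ≤ τ_t ≤ 1 − αη + η/(1−ε). -/

import Mathlib

/-- The robust pinball subgradient. -/
noncomputable def robustGrad (α ε : ℝ) (K : ℕ) (τ stil : ℝ) (s : Fin K → ℝ) : ℝ :=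
  (1 / (1 - ε)) * ((if stil ≤ τ then (1:ℝ) else 0) - (1 - α))
    - (ε / ((K : ℝ) * (1 - ε))) * ∑ y : Fin K, ((if s y ≤ τ then (1:ℝ) else 0) - (1 - α))

lemma robustGrad_eq_div (α ε : ℝ) (hε : ε ≠ 1) (K : ℕ) (hK : 1 ≤ K)
    (τ stil : ℝ) (s : Fin K → ℝ) :
    robustGrad α ε K τ stil s =
      ((K : ℝ) * ((if stil ≤ τ then (1:ℝ) else 0) - (1 - α))
        - ε * ∑ y : Fin K, ((if s y ≤ τ then (1:ℝ) else 0) - (1 - α)))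
      / ((K : ℝ) * (1 - ε)) := by
  have hK0 : (K : ℝ) ≠ 0 := by positivity
  have h1ε : (1 : ℝ) - ε ≠ 0 := sub_ne_zero.mpr (Ne.symm hε)
  unfold robustGrad
  field_simp

lemma sum_ind_bounds (α τ : ℝ) (K : ℕ) (s : Fin K → ℝ) :
    (K : ℝ) * (α - 1) ≤ ∑ y : Fin K, ((if s y ≤ τ then (1:ℝ) else 0) - (1 - α)) ∧
    ∑ y : Fin K, ((if s y ≤ τ then (1:ℝ) else 0) - (1 - α)) ≤ (K : ℝ) * α := by
  have e1 : ∑ _y : Fin K, (α - 1) = (K:ℝ) * (α - 1) := by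
    simp [Finset.sum_const, mul_comm]; ring
  have e2 : ∑ _y : Fin K, α = (K:ℝ) * α := by
    simp [Finset.sum_const, mul_comm]
  constructor
  · rw [← e1]
    exact Finset.sum_le_sum (fun y _ => by split <;> linarith)
  · rw [← e2]
    exact Finset.sum_le_sum (fun y _ => by split <;> linarith)

lemma robustGrad_bounds (α ε : ℝ) (hε : ε ∈ Set.Ioo (0:ℝ) 1)
    (K : ℕ) (hK : 1 ≤ K) (τ stil : ℝ) (s : Fin K → ℝ) :
    α - 1 / (1 - ε) ≤ robustGrad α ε K τ stil s ∧
      robustGrad α ε K τ stil s ≤ α + ε / (1 - ε) := by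
  obtain ⟨hε0, hε1⟩ := hε
  have h1ε : (0:ℝ) < 1 - ε := by linarith
  have hKpos : (0:ℝ) < K := by exact_mod_cast hK
  have hden : (0:ℝ) < (K : ℝ) * (1 - ε) := by positivity
  rw [robustGrad_eq_div α ε (by linarith) K hK]
  obtain ⟨hS1, hS2⟩ := sum_ind_bounds α τ K s
  have hI1 : (α : ℝ) - 1 ≤ (if stil ≤ τ then (1:ℝ) else 0) - (1 - α) := by split <;> linarith
  have hI2 : (if stil ≤ τ then (1:ℝ) else 0) - (1 - α) ≤ α := by split <;> linarith
  constructor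
  · rw [le_div_iff₀ hden]
    have e : (α - 1 / (1 - ε)) * ((K:ℝ) * (1 - ε)) = α * K * (1 - ε) - K := by
      field_simp
    rw [e]
    nlinarith [mul_le_mul_of_nonneg_left hS2 hε0.le,
      mul_le_mul_of_nonneg_left hI1 hKpos.le]
  · rw [div_le_iff₀ hden]
    have e : (α + ε / (1 - ε)) * ((K:ℝ) * (1 - ε)) = α * K * (1 - ε) + ε * K := by
      field_simp
    rw [e]
    nlinarith [mul_le_mul_of_nonneg_left hS1 hε0.le,
      mul_le_mul_of_nonneg_left hI2 hKpos.le]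

lemma robustGrad_of_all_le (α ε : ℝ) (hε : ε ∈ Set.Ioo (0:ℝ) 1)
    (K : ℕ) (hK : 1 ≤ K) (τ stil : ℝ) (s : Fin K → ℝ)
    (h1 : stil ≤ τ) (h2 : ∀ y, s y ≤ τ) :
    robustGrad α ε K τ stil s = α := by
  have h1ε : (1:ℝ) - ε ≠ 0 := by rcases hε with ⟨_, h⟩; intro hc; linarith
  have hK0 : (K : ℝ) ≠ 0 := by positivity
  unfold robustGrad
  rw [if_pos h1]
  have : ∀ y : Fin K, ((if s y ≤ τ then (1:ℝ) else 0) - (1 - α)) = α := by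
    intro y; rw [if_pos (h2 y)]; ring
  rw [Finset.sum_congr rfl (fun y _ => this y), Finset.sum_const]
  simp only [Finset.card_univ, Fintype.card_fin, nsmul_eq_mul]
  field_simp
  ring

lemma robustGrad_of_all_gt (α ε : ℝ) (hε : ε ∈ Set.Ioo (0:ℝ) 1)
    (K : ℕ) (hK : 1 ≤ K) (τ stil : ℝ) (s : Fin K → ℝ)
    (h1 : ¬ stil ≤ τ) (h2 : ∀ y, ¬ s y ≤ τ) :
    robustGrad α ε K τ stil s = α - 1 := by
  have h1ε : (1:ℝ) - ε ≠ 0 := by rcases hε with ⟨_, h⟩; intro hc; linarith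
  have hK0 : (K : ℝ) ≠ 0 := by positivity
  unfold robustGrad
  rw [if_neg h1]
  have : ∀ y : Fin K, ((if s y ≤ τ then (1:ℝ) else 0) - (1 - α)) = α - 1 := by
    intro y; rw [if_neg (h2 y)]; ring
  rw [Finset.sum_congr rfl (fun y _ => this y), Finset.sum_const]
  simp only [Finset.card_univ, Fintype.card_fin, nsmul_eq_mul]
  field_simp
  ring

/-- boundedness of the NR-OCP threshold iterates under constant learning rate. -/
theorem nrocp_threshold_bounded_constant_lr
    (α ε : ℝ) (hα : α ∈ Set.Ioo (0:ℝ) 1) (hε : ε ∈ Set.Ioo (0:ℝ) 1)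
    (K : ℕ) (hK : 1 ≤ K) (η : ℝ) (hη : 0 < η)
    (stil : ℕ → ℝ) (hstil : ∀ t, 1 ≤ t → stil t ∈ Set.Icc (0:ℝ) 1)
    (s : ℕ → Fin K → ℝ) (hs : ∀ t, 1 ≤ t → ∀ y, s t y ∈ Set.Icc (0:ℝ) 1)
    (τ : ℕ → ℝ) (hτ1 : τ 1 ∈ Set.Icc (0:ℝ) 1)
    (hupd : ∀ t, 1 ≤ t → τ (t + 1) = τ t - η * robustGrad α ε K (τ t) (stil t) (s t)) :
    ∀ t, 1 ≤ t →
      -α * η - ε * η / (1 - ε) ≤ τ t ∧ τ t ≤ 1 - α * η + η / (1 - ε) := by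
  obtain ⟨hα0, hα1⟩ := hα
  obtain ⟨hε0, hε1⟩ := hε
  have h1ε : (0:ℝ) < 1 - ε := by linarith
  have hεdiv : 0 ≤ ε * η / (1 - ε) := by positivity
  have hdiv : 0 < η / (1 - ε) := by positivity
  have hα1ε : α < 1 / (1 - ε) := by
    rw [lt_div_iff₀ h1ε]; nlinarith
  intro t ht
  induction t, ht using Nat.le_induction with
  | base =>
    obtain ⟨h0, h1⟩ := hτ1
    constructor
    · nlinarith
    · have : α * η < η / (1 - ε) := by
        rw [lt_div_iff₀ h1ε]
        nlinarith [mul_lt_mul_of_pos_left (show α * (1 - ε) < 1 by nlinarith) hη]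
      linarith
  | succ n hn ih =>
    obtain ⟨ihL, ihU⟩ := ih
    rw [hupd n hn]
    obtain ⟨hgL, hgU⟩ := robustGrad_bounds α ε ⟨hε0, hε1⟩ K hK (τ n) (stil n) (s n)
    constructor
    · -- lower bound
      by_cases hcase : 0 ≤ τ n
      · have : η * robustGrad α ε K (τ n) (stil n) (s n) ≤ η * (α + ε / (1 - ε)) :=
          mul_le_mul_of_nonneg_left hgU hη.le
        have h2 : η * (α + ε / (1 - ε)) = α * η + ε * η / (1 - ε) := by
          field_simp
        linarith
      · push_neg at hcase
        have hg : robustGrad α ε K (τ n) (stil n) (s n) = α - 1 := by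
          apply robustGrad_of_all_gt α ε ⟨hε0, hε1⟩ K hK
          · intro hc; exact absurd (le_trans (hstil n hn).1 hc) (not_le.mpr hcase)
          · intro y hc; exact absurd (le_trans (hs n hn y).1 hc) (not_le.mpr hcase)
        rw [hg]
        nlinarith
    · -- upper bound
      by_cases hcase : τ n ≤ 1
      · have : η * (α - 1 / (1 - ε)) ≤ η * robustGrad α ε K (τ n) (stil n) (s n) :=
          mul_le_mul_of_nonneg_left hgL hη.le
        have h2 : η * (α - 1 / (1 - ε)) = α * η - η / (1 - ε) := by
          field_simp
        linarith
      · push_neg at hcase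
        have hg : robustGrad α ε K (τ n) (stil n) (s n) = α := by
          apply robustGrad_of_all_le α ε ⟨hε0, hε1⟩ K hK
          · exact le_trans (hstil n hn).2 hcase.le
          · intro y; exact le_trans (hs n hn y).2 hcase.le
        rw [hg]
        nlinarith
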